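/- Two unranked trees are UN-bisimilar if and only if they are root-to-root bisimilar: if t and t' are (rooted, unranked) trees over a signature with one binary child relation and finitely many unary predicates, then there exists a nonempty UN-bisimulation between t and t' containing the pair of roots if and only if the roots of t and t' are related by an ordinary bisimulation between t and t'. -/

import Mathlib

/-- A rooted (unranked) tree: a node type with a child relation, a root, unary predicates
indexed by `P`, such that the root has no parent, parents are unique, and every node is
reachable from the root. -/
structure URTree (P : Type) where
  V : Type
  root : V
  child : V → V → Prop
  label : P → V → Prop
  root_no_parent : ∀ v, ¬ child v root
  parent_unique : ∀ ⦃u v w : V⦄, child u w → child v w → u = v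
  reachable : ∀ v, Relation.ReflTransGen child root v

/-- An ordinary bisimulation between two trees: related nodes satisfy the same unary
predicates and the back-and-forth conditions hold along the child relation. -/
def IsBisim {P : Type} (t t' : URTree P) (Z : t.V → t'.V → Prop) : Prop :=
  ∀ a b, Z a b →
    (∀ p, t.label p a ↔ t'.label p b) ∧
    (∀ a', t.child a a' → ∃ b', t'.child b b' ∧ Z a' b') ∧
    (∀ b', t'.child b b' → ∃ a', t.child a a' ∧ Z a' b')

/-- A partial homomorphism between trees with domain `X`: preserves unary predicates and the
child relation on `X`. -/
def TPartialHom {P : Type} (t t' : URTree P) (X : Set t.V) (h : t.V → t'.V) : Prop :=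
  (∀ a ∈ X, ∀ p, t.label p a → t'.label p (h a)) ∧
  (∀ a ∈ X, ∀ b ∈ X, t.child a b → t'.child (h a) (h b))

/-- A UN-bisimulation between two trees. -/
def TIsUNBisim {P : Type} (t t' : URTree P) (Z : t.V → t'.V → Prop) : Prop :=
  ∀ a b, Z a b →
    (∀ X : Set t.V, X.Finite →
      ∃ h : t.V → t'.V, TPartialHom t t' X h ∧ (a ∈ X → h a = b) ∧ ∀ x ∈ X, Z x (h x)) ∧
    (∀ Y : Set t'.V, Y.Finite →
      ∃ g : t'.V → t.V, TPartialHom t' t Y g ∧ (b ∈ Y → g b = a) ∧ ∀ y ∈ Y, Z (g y) y)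

namespace UNBAux

open Relation

variable {P : Type}

lemma acc_child (s : URTree P) : ∀ v, Acc s.child v := by
  have H : ∀ v, ReflTransGen s.child s.root v → Acc s.child v := by
    intro v h
    induction h with
    | refl => exact ⟨_, fun x hx => absurd hx (s.root_no_parent x)⟩
    | tail h1 h2 ih =>
      refine ⟨_, fun x hx => ?_⟩
      rwa [s.parent_unique hx h2]
  exact fun v => H v (s.reachable v)

lemma acc_nrefl {α : Type*} {r : α → α → Prop} {a : α} (h : Acc r a) : ¬ r a a := by
  induction h with
  | intro a _ ih => exact fun hr => ih a hr hr

lemma no_cycle (s : URTree P) {u v : s.V} (h1 : ReflTransGen s.child u v)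
    (h2 : TransGen s.child v u) : False := by
  have htg : TransGen s.child u u := TransGen.trans_right h1 h2
  exact acc_nrefl (acc_child s u).transGen htg

lemma anc_antisymm (s : URTree P) {u v : s.V} (h1 : ReflTransGen s.child u v)
    (h2 : ReflTransGen s.child v u) : u = v := by
  rcases h1.cases_tail with h | ⟨c, hc1, hc2⟩
  · exact h.symm
  · exact absurd (no_cycle s h2 (TransGen.tail' hc1 hc2)) not_false

lemma anc_root (s : URTree P) {u : s.V} (h : ReflTransGen s.child u s.root) : u = s.root := by
  rcases h.cases_tail with h | ⟨c, _, hc2⟩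
  · exact h.symm
  · exact absurd hc2 (s.root_no_parent c)

lemma anc_finite (s : URTree P) (v : s.V) : {u | ReflTransGen s.child u v}.Finite := by
  have H : ∀ v, ReflTransGen s.child s.root v → {u | ReflTransGen s.child u v}.Finite := by
    intro v h
    induction h with
    | refl =>
      refine (Set.finite_singleton s.root).subset ?_
      intro u hu; exact anc_root s hu
    | @tail b c h1 h2 ih =>
      refine (ih.insert c).subset ?_
      intro u hu
      rcases Relation.ReflTransGen.cases_tail (hu : ReflTransGen s.child u c) with h | ⟨w, hw1, hw2⟩
      · exact Set.mem_insert_iff.mpr (Or.inl h.symm)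
      · exact Set.mem_insert_iff.mpr (Or.inr (by rwa [s.parent_unique hw2 h2] at hw1))
  exact H v (s.reachable v)

noncomputable def dep (s : URTree P) (v : s.V) : ℕ := {u | ReflTransGen s.child u v}.ncard

lemma dep_lt (s : URTree P) {u v : s.V} (h : s.child u v) : dep s u < dep s v := by
  apply Set.ncard_lt_ncard _ (anc_finite s v)
  constructor
  · intro w hw; exact ReflTransGen.tail hw h
  · intro hsub
    have hv : v ∈ {u' | ReflTransGen s.child u' v} := ReflTransGen.refl
    have := hsub hv
    exact no_cycle s this (TransGen.single h)

lemma dep_lt_tg (s : URTree P) {u v : s.V} (h : TransGen s.child u v) : dep s u < dep s v := by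
  induction h with
  | single h => exact dep_lt s h
  | tail _ h2 ih => exact ih.trans (dep_lt s h2)

lemma closed_anc (s : URTree P) {X : Set s.V} (hcl : ∀ x ∈ X, ∀ u, s.child u x → u ∈ X)
    {u x : s.V} (h : ReflTransGen s.child u x) : x ∈ X → u ∈ X := by
  induction h with
  | refl => exact id
  | tail _ h2 ih => intro hx; exact ih (hcl _ hx _ h2)

/-- Chains of pointwise-`B`-related paths from the roots. -/
inductive Chain (s s' : URTree P) (B : s.V → s'.V → Prop) : s.V → s'.V → Prop
  | root : B s.root s'.root → Chain s s' B s.root s'.root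
  | step {a b a' b'} : Chain s s' B a b → s.child a a' → s'.child b b' → B a' b' →
      Chain s s' B a' b'

lemma chain_B {s s' : URTree P} {B : s.V → s'.V → Prop} {a b}
    (h : Chain s s' B a b) : B a b := by
  cases h with
  | root h => exact h
  | step _ _ _ h => exact h

lemma chain_swap {s s' : URTree P} {B : s.V → s'.V → Prop} {a b}
    (h : Chain s s' B a b) : Chain s' s (fun y x => B x y) b a := by
  induction h with
  | root h => exact Chain.root h
  | step _ h1 h2 h3 ih => exact Chain.step ih h2 h1 h3

lemma chain_root {s s' : URTree P} {B : s.V → s'.V → Prop} {b}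
    (h : Chain s s' B s.root b) : b = s'.root := by
  cases h with
  | root _ => rfl
  | step _ hca _ _ => exact absurd hca (s.root_no_parent _)

/-- Key lemma: a chain pair extends to a homomorphism on any finite ancestor-closed set. -/
lemma key (s s' : URTree P) (B : s.V → s'.V → Prop)
    (hforth : ∀ a b, B a b → ∀ a', s.child a a' → ∃ b', s'.child b b' ∧ B a' b') :
    ∀ n (X : Set s.V), X.Finite → X.ncard ≤ n →
    ∀ a b, Chain s s' B a b → a ∈ X →
    (∀ x ∈ X, ∀ u, s.child u x → u ∈ X) →
    ∃ h : s.V → s'.V,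
      (∀ x ∈ X, ∀ y ∈ X, s.child x y → s'.child (h x) (h y)) ∧
      h a = b ∧ ∀ x ∈ X, Chain s s' B x (h x) := by
  classical
  intro n
  induction n with
  | zero =>
    intro X hXf hc a b _ haX _
    have : X = ∅ := by
      have := Set.ncard_eq_zero hXf |>.mp (Nat.le_zero.mp hc)
      exact this
    simp [this] at haX
  | succ n ih =>
    intro X hXf hcard a b hch haX hclosed
    by_cases hleaf : ∀ x ∈ X, ¬ s.child a x
    · -- `a` is a leaf of `X`: remove it
      by_cases hroot : a = s.root
      · subst hroot
        have hb : b = s'.root := chain_root hch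
        have hXsub : ∀ x ∈ X, x = s.root := by
          intro x hx
          rcases (s.reachable x).cases_head with h | ⟨c, hc1, hc2⟩
          · exact h.symm
          · exact absurd hc1 (hleaf c (closed_anc s hclosed hc2 hx))
        refine ⟨fun _ => b, ?_, rfl, ?_⟩
        · intro x hx y hy hxy
          rw [hXsub x hx, hXsub y hy] at hxy
          exact absurd hxy (s.root_no_parent _)
        · intro x hx; rw [hXsub x hx]; exact hch
      · obtain ⟨p, q, hchpq, hpa, hqb⟩ :
            ∃ p q, Chain s s' B p q ∧ s.child p a ∧ s'.child q b := by
          cases hch with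
          | root _ => exact absurd rfl hroot
          | step hc h1 h2 _ => exact ⟨_, _, hc, h1, h2⟩
        have hpX : p ∈ X := hclosed a haX p hpa
        have hpa' : p ≠ a := fun h => hleaf a haX (h ▸ hpa)
        have hclosed' : ∀ x ∈ X \ {a}, ∀ u, s.child u x → u ∈ X \ {a} := by
          intro x hx u hu
          refine ⟨hclosed x hx.1 u hu, ?_⟩
          intro hua
          exact hleaf x hx.1 ((Set.mem_singleton_iff.mp hua) ▸ hu)
        have hcard' : (X \ {a}).ncard ≤ n := by
          have := Set.ncard_diff_singleton_lt_of_mem haX hXf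
          omega
        obtain ⟨h', hhom', hpq', hch'⟩ := ih (X \ {a}) hXf.diff hcard' p q hchpq
          ⟨hpX, hpa'⟩ hclosed'
        refine ⟨Function.update h' a b, ?_, Function.update_self a b h', ?_⟩
        · intro x hx y hy hxy
          by_cases hya : y = a
          · subst hya
            have hxp : x = p := s.parent_unique hxy hpa
            subst hxp
            rw [Function.update_of_ne hpa', Function.update_self, hpq']
            exact hqb
          · have hxa : x ≠ a := by
              intro h; subst h; exact hleaf y hy hxy
            rw [Function.update_of_ne hxa, Function.update_of_ne hya]
            exact hhom' x ⟨hx, hxa⟩ y ⟨hy, hya⟩ hxy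
        · intro x hx
          by_cases hxa : x = a
          · subst hxa; rw [Function.update_self]; exact hch
          · rw [Function.update_of_ne hxa]; exact hch' x ⟨hx, hxa⟩
    · -- some child of `a` lies in `X`: remove a deepest descendant leaf `v ≠ a`
      push_neg at hleaf
      obtain ⟨x0, hx0X, hax0⟩ := hleaf
      have hSf : {w ∈ X | ReflTransGen s.child x0 w}.Finite := hXf.subset (Set.sep_subset _ _)
      have hSne : {w ∈ X | ReflTransGen s.child x0 w}.Nonempty := ⟨x0, hx0X, ReflTransGen.refl⟩
      obtain ⟨v, hvS, hvmax⟩ := Set.Finite.exists_maximalFor (dep s) _ hSf hSne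
      have hvleaf : ∀ y ∈ X, ¬ s.child v y := by
        intro y hy hcy
        have hyS : y ∈ {w ∈ X | ReflTransGen s.child x0 w} := ⟨hy, hvS.2.tail hcy⟩
        have hlt := dep_lt s hcy
        exact absurd (hvmax hyS hlt.le) (not_le.mpr hlt)
      have htg : TransGen s.child a v := TransGen.head' hax0 hvS.2
      have hva : v ≠ a := fun h => (dep_lt_tg s htg).ne' (congrArg (dep s) h)
      have hav : a ≠ v := fun h => hva h.symm
      obtain ⟨p, hp2⟩ : ∃ p, s.child p v := by
        rcases (s.reachable v).cases_tail with h | ⟨c, _, hc2⟩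
        · exfalso
          have : a = s.root := anc_root s (h ▸ htg.to_reflTransGen)
          exact absurd (h ▸ this ▸ htg) (fun h' => no_cycle s ReflTransGen.refl h')
        · exact ⟨c, hc2⟩
      have hpX : p ∈ X := hclosed v hvS.1 p hp2
      have hpv : p ≠ v := fun h => hvleaf v hvS.1 (h ▸ hp2)
      have hclosed' : ∀ x ∈ X \ {v}, ∀ u, s.child u x → u ∈ X \ {v} := by
        intro x hx u hu
        refine ⟨hclosed x hx.1 u hu, ?_⟩
        intro huv
        exact hvleaf x hx.1 ((Set.mem_singleton_iff.mp huv) ▸ hu)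
      have hcard' : (X \ {v}).ncard ≤ n := by
        have := Set.ncard_diff_singleton_lt_of_mem hvS.1 hXf
        omega
      obtain ⟨h', hhom', hab', hch'⟩ := ih (X \ {v}) hXf.diff hcard' a b hch
        ⟨haX, hav⟩ hclosed'
      have hchp : Chain s s' B p (h' p) := hch' p ⟨hpX, hpv⟩
      obtain ⟨b', hb'c, hb'B⟩ := hforth p (h' p) (chain_B hchp) v hp2
      refine ⟨Function.update h' v b', ?_, ?_, ?_⟩
      · intro x hx y hy hxy
        by_cases hyv : y = v
        · subst hyv
          have hxp : x = p := s.parent_unique hxy hp2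
          subst hxp
          rw [Function.update_of_ne hpv, Function.update_self]
          exact hb'c
        · have hxv : x ≠ v := by
            intro h; subst h; exact hvleaf y hy hxy
          rw [Function.update_of_ne hxv, Function.update_of_ne hyv]
          exact hhom' x ⟨hx, hxv⟩ y ⟨hy, hyv⟩ hxy
      · rw [Function.update_of_ne hav]; exact hab'
      · intro x hx
        by_cases hxv : x = v
        · subst hxv; rw [Function.update_self]
          exact Chain.step hchp hp2 hb'c hb'B
        · rw [Function.update_of_ne hxv]; exact hch' x ⟨hx, hxv⟩

/-- One side of the UN-bisimulation condition for `Chain`. -/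
lemma forth_side (s s' : URTree P) (B : s.V → s'.V → Prop)
    (hforth : ∀ a b, B a b → ∀ a', s.child a a' → ∃ b', s'.child b b' ∧ B a' b')
    (hlab : ∀ a b, B a b → ∀ p, s.label p a → s'.label p b)
    {a b} (hab : Chain s s' B a b) (X : Set s.V) (hXf : X.Finite) :
    ∃ h : s.V → s'.V, TPartialHom s s' X h ∧ (a ∈ X → h a = b) ∧
      ∀ x ∈ X, Chain s s' B x (h x) := by
  set Y : Set s.V := ⋃ x ∈ insert a X, {u | ReflTransGen s.child u x} with hY
  have hYf : Y.Finite := (hXf.insert a).biUnion (fun x _ => anc_finite s x)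
  have hmem : ∀ u, u ∈ Y ↔ ∃ x ∈ insert a X, ReflTransGen s.child u x := by
    intro u; simp [hY]
  have haY : a ∈ Y := (hmem a).mpr ⟨a, Set.mem_insert a X, ReflTransGen.refl⟩
  have hXY : X ⊆ Y := by
    intro x hx; exact (hmem x).mpr ⟨x, Set.mem_insert_of_mem a hx, ReflTransGen.refl⟩
  have hclosed : ∀ x ∈ Y, ∀ u, s.child u x → u ∈ Y := by
    intro x hx u hu
    obtain ⟨w, hw1, hw2⟩ := (hmem x).mp hx
    exact (hmem u).mpr ⟨w, hw1, ReflTransGen.head hu hw2⟩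
  obtain ⟨h, hhom, hhab, hchain⟩ := key s s' B hforth Y.ncard Y hYf le_rfl a b hab haY hclosed
  refine ⟨h, ⟨?_, ?_⟩, fun _ => hhab, fun x hx => hchain x (hXY hx)⟩
  · intro x hx p hp
    exact hlab x (h x) (chain_B (hchain x (hXY hx))) p hp
  · intro x hx y hy hxy
    exact hhom x (hXY hx) y (hXY hy) hxy

end UNBAux

/-- two unranked trees are UN-bisimilar (via a UN-bisimulation containing the
pair of roots) if and only if they are root-to-root bisimilar. -/
theorem unbisim_iff_root_to_root_bisim {P : Type} [Finite P] (t t' : URTree P) :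
    (∃ Z : t.V → t'.V → Prop, TIsUNBisim t t' Z ∧ Z t.root t'.root) ↔
    (∃ Z : t.V → t'.V → Prop, IsBisim t t' Z ∧ Z t.root t'.root) := by
  constructor
  · rintro ⟨Z, hZ, hroot⟩
    refine ⟨Z, ?_, hroot⟩
    intro a b hab
    obtain ⟨hf, hb⟩ := hZ a b hab
    refine ⟨?_, ?_, ?_⟩
    · intro p
      obtain ⟨h, ⟨hl, _⟩, hha, _⟩ := hf {a} (Set.finite_singleton a)
      obtain ⟨g, ⟨gl, _⟩, hgb, _⟩ := hb {b} (Set.finite_singleton b)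
      constructor
      · intro hp
        have := hl a rfl p hp
        rwa [hha rfl] at this
      · intro hp
        have := gl b rfl p hp
        rwa [hgb rfl] at this
    · intro a' ha'
      obtain ⟨h, ⟨_, hlc⟩, hha, hZx⟩ := hf {a, a'} ((Set.finite_singleton a').insert a)
      refine ⟨h a', ?_, hZx a' (Or.inr rfl)⟩
      have := hlc a (Or.inl rfl) a' (Or.inr rfl) ha'
      rwa [hha (Or.inl rfl)] at this
    · intro b' hb'
      obtain ⟨g, ⟨_, hlc⟩, hgb, hZy⟩ := hb {b, b'} ((Set.finite_singleton b').insert b)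
      refine ⟨g b', ?_, hZy b' (Or.inr rfl)⟩
      have := hlc b (Or.inl rfl) b' (Or.inr rfl) hb'
      rwa [hgb (Or.inl rfl)] at this
  · rintro ⟨Z0, hZ0, hroot⟩
    classical
    set B : t.V → t'.V → Prop := fun a b => ∃ Z, IsBisim t t' Z ∧ Z a b with hB
    have hlab : ∀ a b, B a b → ∀ p, t.label p a ↔ t'.label p b := by
      rintro a b ⟨Z, hZ, hab⟩ p
      exact (hZ a b hab).1 p
    have hforth : ∀ a b, B a b → ∀ a', t.child a a' → ∃ b', t'.child b b' ∧ B a' b' := by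
      rintro a b ⟨Z, hZ, hab⟩ a' ha'
      obtain ⟨b', hb1, hb2⟩ := (hZ a b hab).2.1 a' ha'
      exact ⟨b', hb1, Z, hZ, hb2⟩
    have hback : ∀ b a, B a b → ∀ b', t'.child b b' → ∃ a', t.child a a' ∧ B a' b' := by
      rintro b a ⟨Z, hZ, hab⟩ b' hb'
      obtain ⟨a', ha1, ha2⟩ := (hZ a b hab).2.2 b' hb'
      exact ⟨a', ha1, Z, hZ, ha2⟩
    have hBroot : B t.root t'.root := ⟨Z0, hZ0, hroot⟩
    refine ⟨UNBAux.Chain t t' B, ?_, UNBAux.Chain.root hBroot⟩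
    intro a b hab
    constructor
    · exact fun X hXf => UNBAux.forth_side t t' B hforth
        (fun a b h p => (hlab a b h p).mp) hab X hXf
    · intro Y hYf
      obtain ⟨g, hgHom, hgb, hgch⟩ := UNBAux.forth_side t' t (fun y x => B x y)
        (fun y x h y' hy' => hback y x h y' hy')
        (fun y x h p => (hlab x y h p).mpr) (UNBAux.chain_swap hab) Y hYf
      exact ⟨g, hgHom, hgb, fun y hy => UNBAux.chain_swap (hgch y hy)⟩
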